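/- Fix a real number q with 0 < q < 1 and let a, b, c, d be the bounded operators on ℓ²(ℕ) defined on the standard orthonormal basis by a e_0 = 0, a e_j = √(1 − q^{2j}) e_{j−1} (j ≥ 1), b e_j = −q^{j+1} e_j, c e_j = q^j e_j, d e_j = √(1 − q^{2(j+1)}) e_{j+1}. Then the only closed linear subspaces of ℓ²(ℕ) that are invariant under each of the operators a, b, c, d are {0} and ℓ²(ℕ); that is, the representation π_q of ℂ_q[SU(2)] is topologically irreducible. -/

import Mathlib

/-- The Hilbert space `ℓ²(ℕ)` of square-summable complex sequences. -/
abbrev L2N : Type := lp (fun _ : ℕ => ℂ) 2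

/-- The standard orthonormal basis vectors `e_j` of `ℓ²(ℕ)`. -/
noncomputable def eN (j : ℕ) : L2N := lp.single 2 j 1

noncomputable def coordCLM (j : ℕ) : L2N →L[ℂ] ℂ :=
  LinearMap.mkContinuous
    { toFun := fun f => f j, map_add' := fun f g => rfl, map_smul' := fun r f => rfl } 1
    (fun f => by rw [one_mul]; exact lp.norm_apply_le_norm (by norm_num) f j)

lemma h2pos : (0:ℝ) < (2 : ENNReal).toReal := by norm_num

lemma norm_le_of_coord (f g : L2N) (h : ∀ i, ‖f i‖ ≤ ‖g i‖) : ‖f‖ ≤ ‖g‖ := by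
  have hf := lp.hasSum_norm h2pos f
  have hg := lp.hasSum_norm h2pos g
  have hle := hasSum_le (fun i => Real.rpow_le_rpow (norm_nonneg _) (h i) (le_of_lt h2pos)) hf hg
  exact (Real.rpow_le_rpow_iff (lp.norm_nonneg' f) (lp.norm_nonneg' g) h2pos).mp hle

lemma coordCLM_apply (j : ℕ) (f : L2N) : coordCLM j f = f j := rfl

lemma eN_apply_self (j : ℕ) : (eN j : ∀ _ : ℕ, ℂ) j = 1 := lp.single_apply_self 2 j 1

lemma eN_apply_ne (j i : ℕ) (h : i ≠ j) : (eN j : ∀ _ : ℕ, ℂ) i = 0 := lp.single_apply_ne 2 j 1 h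

lemma single_eq_smul_eN (i : ℕ) (x : ℂ) : lp.single 2 i x = x • eN i := by
  rw [eN, ← lp.single_smul]; norm_num

lemma coord_c (q : ℝ) (c : L2N →L[ℂ] L2N)
    (hc : ∀ j : ℕ, c (eN j) = ((q ^ j : ℝ) : ℂ) • eN j) (f : L2N) (j : ℕ) :
    (c f) j = ((q^j : ℝ) : ℂ) * f j := by
  have h1 : HasSum (fun i => lp.single 2 i (f i)) f := lp.hasSum_single (by norm_num) f
  have h3 : HasSum (fun i => coordCLM j (c (lp.single 2 i (f i)))) (coordCLM j (c f)) :=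
    ((coordCLM j).comp c).hasSum h1
  have key : ∀ i : ℕ, coordCLM j (c (lp.single 2 i (f i)))
      = if i = j then ((q^j:ℝ):ℂ) * f j else 0 := by
    intro i
    rw [single_eq_smul_eN, map_smul, hc i, coordCLM_apply]
    by_cases hij : i = j
    · subst hij
      simp [lp.coeFn_smul, eN_apply_self, mul_comm]
    · simp [lp.coeFn_smul, eN_apply_ne i j (Ne.symm hij), hij]
  have : (c f) j = coordCLM j (c f) := rfl
  rw [this]
  refine h3.unique ?_
  rw [(funext key : _)]
  exact hasSum_ite_eq j _

lemma coord_c_pow (q : ℝ) (c : L2N →L[ℂ] L2N)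
    (hc : ∀ j : ℕ, c (eN j) = ((q ^ j : ℝ) : ℂ) • eN j) (n : ℕ) (f : L2N) (j : ℕ) :
    ((c^n) f) j = ((q ^ (j * n) : ℝ) : ℂ) * f j := by
  induction n generalizing f with
  | zero => simp
  | succ n ih =>
    rw [pow_succ', ContinuousLinearMap.mul_apply, coord_c q c hc, ih f]
    push_cast
    rw [← mul_assoc, ← pow_add]
    have h : j + j * n = j * (n + 1) := by ring
    rw [h]

theorem stmt_3 (q : ℝ) (hq0 : 0 < q) (hq1 : q < 1)
    (a b c d : L2N →L[ℂ] L2N)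
    (ha0 : a (eN 0) = 0)
    (ha : ∀ j : ℕ, 1 ≤ j →
      a (eN j) = ((Real.sqrt (1 - q ^ (2 * j)) : ℝ) : ℂ) • eN (j - 1))
    (hb : ∀ j : ℕ, b (eN j) = ((-(q ^ (j + 1)) : ℝ) : ℂ) • eN j)
    (hc : ∀ j : ℕ, c (eN j) = ((q ^ j : ℝ) : ℂ) • eN j)
    (hd : ∀ j : ℕ, d (eN j) = ((Real.sqrt (1 - q ^ (2 * (j + 1))) : ℝ) : ℂ) • eN (j + 1)) :
    ∀ V : Submodule ℂ L2N, IsClosed (V : Set L2N) →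
      (∀ v ∈ V, a v ∈ V) → (∀ v ∈ V, b v ∈ V) →
      (∀ v ∈ V, c v ∈ V) → (∀ v ∈ V, d v ∈ V) →
      V = ⊥ ∨ V = ⊤ := by
  intro V hV haV hbV hcV hdV
  by_cases hbot : V = ⊥
  · exact Or.inl hbot
  right
  -- pick a nonzero element of V
  obtain ⟨v, hvV, hv0⟩ := Submodule.ne_bot_iff V |>.mp hbot
  have hex : ∃ j : ℕ, v j ≠ 0 := by
    by_contra h
    push_neg at h
    exact hv0 (lp.ext (funext h))
  set j0 := Nat.find hex with hj0def
  have hj0 : v j0 ≠ 0 := Nat.find_spec hex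
  have hmin : ∀ i, i < j0 → v i = 0 := fun i hi => not_not.mp (Nat.find_min hex hi)
  -- powers of c stay in V
  have hmem : ∀ n : ℕ, (c^n) v ∈ V := by
    intro n
    induction n with
    | zero => simpa using hvV
    | succ n ih =>
      rw [pow_succ', ContinuousLinearMap.mul_apply]
      exact hcV _ ih
  -- the scaled iterates
  set w : ℕ → L2N := fun n => (((q ^ (j0 * n) : ℝ) : ℂ))⁻¹ • (c^n) v with hwdef
  have hwV : ∀ n, w n ∈ V := fun n => Submodule.smul_mem V _ (hmem n)
  set g : L2N := (v j0) • eN j0 with hgdef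
  have hqj0n : ∀ n : ℕ, ((q ^ (j0 * n) : ℝ) : ℂ) ≠ 0 := by
    intro n
    simp only [ne_eq, Complex.ofReal_eq_zero]
    positivity
  -- coordinate-wise bound
  have hbound : ∀ n : ℕ, ‖w n - g‖ ≤ q ^ n * ‖v‖ := by
    intro n
    have : ‖w n - g‖ ≤ ‖((q ^ n : ℝ) : ℂ) • v‖ := by
      apply norm_le_of_coord
      intro j
      have hwc : (w n - g) j = (((q ^ (j0 * n) : ℝ) : ℂ))⁻¹ * (((q ^ (j * n) : ℝ) : ℂ) * v j)
          - (v j0) * (eN j0 : ∀ _ : ℕ, ℂ) j := by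
        have h1 : (w n - g) j = (w n) j - g j := by
          rw [lp.coeFn_sub]; rfl
        rw [h1, hwdef, hgdef]
        have h2 : (((((q ^ (j0 * n) : ℝ) : ℂ))⁻¹ • (c^n) v : L2N)) j
            = (((q ^ (j0 * n) : ℝ) : ℂ))⁻¹ * ((c^n) v) j := by
          rw [lp.coeFn_smul]; rfl
        have h3 : (((v j0) • eN j0 : L2N)) j = (v j0) * (eN j0 : ∀ _ : ℕ, ℂ) j := by
          rw [lp.coeFn_smul]; rfl
        rw [h2, h3, coord_c_pow q c hc]
      have hsc : (((q ^ n : ℝ) : ℂ) • v) j = ((q ^ n : ℝ) : ℂ) * v j := by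
        rw [lp.coeFn_smul]; rfl
      rw [hwc, hsc]
      rcases lt_trichotomy j j0 with hj | hj | hj
      · rw [hmin j hj, eN_apply_ne j0 j (Nat.ne_of_lt hj)]
        simp
      · subst hj
        rw [eN_apply_self]
        rw [inv_mul_cancel_left₀ (hqj0n n)]
        simp
        positivity
      · rw [eN_apply_ne j0 j (Nat.ne_of_gt hj)]
        rw [mul_zero, sub_zero, norm_mul, norm_mul, norm_mul, norm_inv]
        simp only [Complex.norm_real, Real.norm_eq_abs, abs_pow, abs_of_pos hq0]
        have hsplit : q ^ (j * n) = q ^ (j0 * n) * q ^ ((j - j0) * n) := by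
          rw [← pow_add, ← Nat.add_mul, Nat.add_sub_cancel' (le_of_lt hj)]
        have key : (q ^ (j0 * n))⁻¹ * q ^ (j * n) ≤ q ^ n := by
          rw [hsplit, inv_mul_cancel_left₀ (by positivity)]
          exact pow_le_pow_of_le_one hq0.le hq1.le (Nat.le_mul_of_pos_left n (by omega))
        rw [← mul_assoc]
        exact mul_le_mul_of_nonneg_right key (norm_nonneg _)
    calc ‖w n - g‖ ≤ ‖((q ^ n : ℝ) : ℂ) • v‖ := this
      _ = q ^ n * ‖v‖ := by
        rw [norm_smul, Complex.norm_real, Real.norm_eq_abs, abs_pow, abs_of_pos hq0]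
  -- w n tends to g
  have htend : Filter.Tendsto w Filter.atTop (nhds g) := by
    rw [tendsto_iff_norm_sub_tendsto_zero]
    have h0 : Filter.Tendsto (fun n => q ^ n * ‖v‖) Filter.atTop (nhds 0) := by
      simpa using (tendsto_pow_atTop_nhds_zero_of_lt_one hq0.le hq1).mul_const ‖v‖
    exact squeeze_zero (fun n => norm_nonneg _) hbound h0
  have hgV : g ∈ V := hV.mem_of_tendsto htend (Filter.Eventually.of_forall hwV)
  have hej0 : eN j0 ∈ V := by
    have h := Submodule.smul_mem V (v j0)⁻¹ hgV
    rwa [hgdef, inv_smul_smul₀ hj0] at h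
  have hsq : ∀ m : ℕ, (0:ℝ) < Real.sqrt (1 - q ^ (2 * (m+1))) := by
    intro m
    apply Real.sqrt_pos.mpr
    have h : q ^ (2 * (m+1)) < 1 := pow_lt_one₀ hq0.le hq1 (by omega)
    linarith
  -- step down to eN 0
  have hdown : ∀ k : ℕ, eN k ∈ V → eN 0 ∈ V := by
    intro k
    induction k with
    | zero => exact id
    | succ k ih =>
      intro hk
      apply ih
      have hA := haV _ hk
      rw [ha (k+1) (by omega)] at hA
      have h := Submodule.smul_mem V (((Real.sqrt (1 - q ^ (2 * (k+1))) : ℝ) : ℂ))⁻¹ hA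
      rw [inv_smul_smul₀ (by exact_mod_cast (hsq k).ne')] at h
      simpa using h
  have he0 : eN 0 ∈ V := hdown j0 hej0
  -- step up to all eN j
  have hup : ∀ j : ℕ, eN j ∈ V := by
    intro j
    induction j with
    | zero => exact he0
    | succ j ih =>
      have hD := hdV _ ih
      rw [hd j] at hD
      have h := Submodule.smul_mem V (((Real.sqrt (1 - q ^ (2 * (j+1))) : ℝ) : ℂ))⁻¹ hD
      rwa [inv_smul_smul₀ (by exact_mod_cast (hsq j).ne')] at h
  -- conclude
  rw [Submodule.eq_top_iff']
  intro f
  have h1 : HasSum (fun i => lp.single 2 i (f i)) f := lp.hasSum_single (by norm_num) f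
  refine hV.mem_of_tendsto h1 (Filter.Eventually.of_forall ?_)
  intro s
  refine Submodule.sum_mem V ?_
  intro i _
  rw [single_eq_smul_eN]
  exact Submodule.smul_mem V _ (hup i)
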